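/- Let Q be the soliton, L the linearized operator Lf = -f'' + f - 5Q⁴f, and R(ε) = 10Q³ε² + 10Q²ε³ + 5Qε⁴ + ε⁵. There exist δ > 0 and C such that the following holds. Let ε ∈ L²(ℝ) ∩ L⁸(ℝ) be real-valued with ‖ε‖_{L²} ≤ δ, and let a, b be real numbers satisfying the modulation equations a(∫(Q/2 + yQ_y)² dy - ∫(2yQ_y + y²Q_{yy})ε dy) - b∫(yQ_{yy} + Q_y)ε dy = ∫L(yQ_{yy} + Q_y)·ε dy - ∫R(ε)·(yQ_y) dy and -a∫ε(yQ + (7/2)y²Q_y + y³Q_{yy}) dy + b(∫(Q/2 + yQ_y)² dy - ∫(Q/2 + (5/2)yQ_y + y²Q_{yy})ε dy) = ∫L(Q/2 + (5/2)yQ_y + y²Q_{yy})·ε dy - ∫(Q/2 + (5/2)yQ_y + y²Q_{yy})R(ε) dy. Then |a| + |b| ≤ C(‖ε‖_{L²} + ‖ε‖_{L²}‖ε‖_{L⁸}⁴). (With a = λ_s/λ and b = x_s/λ - 1 these are the modulation parameter bounds.) -/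

import Mathlib

noncomputable section

open MeasureTheory Filter Topology Set
open scoped ENNReal

namespace GKdV

/-- The soliton `Q(x) = 3^{1/4} cosh(2x)^{-1/2}`. -/
def Q (x : ℝ) : ℝ := (3 : ℝ) ^ ((1 : ℝ)/4) * (Real.cosh (2 * x)) ^ (-(1 : ℝ)/2)

/-- Fourier transform (formal; junk value off integrable functions). -/
def FT (f : ℝ → ℂ) (ξ : ℝ) : ℂ :=
  ((2 * Real.pi) ^ (-(1:ℝ)/2) : ℝ) * ∫ x : ℝ, Complex.exp (-(Complex.I * x * ξ)) * f x

/-- Inverse Fourier transform (formal). -/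
def IFT (f : ℝ → ℂ) (x : ℝ) : ℂ :=
  ((2 * Real.pi) ^ (-(1:ℝ)/2) : ℝ) * ∫ ξ : ℝ, Complex.exp (Complex.I * x * ξ) * f ξ

/-- The Airy propagator `e^{-t∂_x³}`: the Fourier multiplier `e^{-itξ³}`. -/
def airyC (t : ℝ) (f : ℝ → ℂ) : ℝ → ℂ :=
  IFT fun ξ => Complex.exp (-(Complex.I * t * (ξ:ℂ)^3)) * FT f ξ

/-- The Airy propagator acting on real-valued functions. -/
def airy (t : ℝ) (f : ℝ → ℝ) : ℝ → ℝ := fun x => (airyC t (fun y => (f y : ℂ)) x).re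

/-- Mixed norm `‖u‖_{L_x^p L_t^q (I × ℝ)} = (∫_ℝ (∫_I |u(t,x)|^q dt)^{p/q} dx)^{1/p}`. -/
def mixedNorm (p q : ℝ) (I : Set ℝ) (u : ℝ → ℝ → ℝ) : ℝ≥0∞ :=
  (∫⁻ x : ℝ, (∫⁻ t in I, ENNReal.ofReal (|u t x| ^ q)) ^ (p / q)) ^ (1 / p)

/-- The mass `M(f) = ∫ f²`. -/
def mass (f : ℝ → ℝ) : ℝ := ∫ x : ℝ, (f x) ^ 2

/-- A strong solution of the focusing mass-critical gKdV equation
`u_t = -(u_{xx} + u⁵)_x` on the interval `I ∋ 0`: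
`u ∈ C_t L²_x ∩ L⁵_x L¹⁰_t (J × ℝ)` for compact `J ⊆ I`, satisfying the Duhamel formula. -/
structure IsSolution (I : Set ℝ) (u : ℝ → ℝ → ℝ) : Prop where
  zero_mem : (0:ℝ) ∈ I
  isInterval : I.OrdConnected
  memL2 : ∀ t ∈ I, MemLp (u t) 2 (volume : Measure ℝ)
  contL2 : ∀ t ∈ I, Tendsto (fun s => eLpNorm (u s - u t) 2 (volume : Measure ℝ))
      (nhdsWithin t I) (nhds 0)
  strichartz : ∀ J ⊆ I, IsCompact J → mixedNorm 5 10 J u < ⊤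
  duhamel : ∀ t ∈ I, ∀ᵐ x : ℝ, u t x = airy t (u 0) x
      - ∫ τ in (0:ℝ)..t, airy (t - τ) (fun y => deriv (fun z => (u τ z)^5) y) x

/-- A maximal-lifespan strong solution: it cannot be extended to a strictly larger interval. -/
def IsMaxSolution (I : Set ℝ) (u : ℝ → ℝ → ℝ) : Prop :=
  IsSolution I u ∧ ∀ I' u', IsSolution I' u' → I ⊆ I' → (∀ t ∈ I, u' t = u t) → I' = I

/-- The rescaled soliton `λ^{-1/2} Q((x - x₀)/λ)`. -/
def solitonResc (lam x₀ : ℝ) : ℝ → ℝ := fun x => lam ^ (-(1:ℝ)/2) * Q ((x - x₀) / lam)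

/-- The symmetry group action `g_{x₀,λ} f(x) = λ^{-1/2} f(λ^{-1}(x - x₀))`. -/
def gAct (x₀ lam : ℝ) (f : ℝ → ℝ) : ℝ → ℝ := fun x => lam ^ (-(1:ℝ)/2) * f ((x - x₀) / lam)

/-- The symmetry group action on complex-valued functions. -/
def gActC (x₀ lam : ℝ) (f : ℝ → ℂ) : ℝ → ℂ :=
  fun x => ((lam ^ (-(1:ℝ)/2) : ℝ) : ℂ) * f ((x - x₀) / lam)

/-- `u` is `δ`-close to `Q` on `I`:
`sup_{t∈I} inf_{λ₀>0, x₀} ‖u(t) - λ₀^{-1/2}Q((·-x₀)/λ₀)‖_{L²} ≤ δ`. -/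
def DeltaClose (δ : ℝ) (I : Set ℝ) (u : ℝ → ℝ → ℝ) : Prop :=
  ∀ t ∈ I, (⨅ (lam : Ioi (0:ℝ)) (x₀ : ℝ),
    eLpNorm (fun x => u t x - solitonResc (lam : ℝ) x₀ x) 2 (volume : Measure ℝ))
      ≤ ENNReal.ofReal δ

/-- `u` is almost periodic modulo symmetries on `I`, with frequency scale `N` and
spatial center `xc`: the orbit `{N(t)^{-1/2} u(t, N(t)^{-1}· + xc(t)) : t ∈ I}` is
contained in a compact subset of `L²(ℝ)`. -/
def AlmostPeriodicWith (I : Set ℝ) (u : ℝ → ℝ → ℝ) (N xc : ℝ → ℝ) : Prop :=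
  ContinuousOn N I ∧ ContinuousOn xc I ∧ (∀ t ∈ I, 0 < N t) ∧
  ∃ K : Set (Lp ℝ 2 (volume : Measure ℝ)), IsCompact K ∧
    ∀ t ∈ I, ∃ f ∈ K, ∀ᵐ x : ℝ, (f : ℝ → ℝ) x = (N t) ^ (-(1:ℝ)/2) * u t ((N t)⁻¹ * x + xc t)

/-- `u` is almost periodic modulo symmetries on `I`. -/
def AlmostPeriodic (I : Set ℝ) (u : ℝ → ℝ → ℝ) : Prop :=
  ∃ N xc : ℝ → ℝ, AlmostPeriodicWith I u N xc

/-- Weak convergence to `0` in `L²(ℝ)` of a sequence of real functions. -/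
def WeakToZero (f : ℕ → ℝ → ℝ) : Prop :=
  ∀ φ : ℝ → ℝ, MemLp φ 2 (volume : Measure ℝ) →
    Tendsto (fun n => ∫ x : ℝ, f n x * φ x) atTop (nhds 0)

/-- Weak convergence to `0` in `L²(ℝ;ℂ)`. -/
def WeakToZeroC (f : ℕ → ℝ → ℂ) : Prop :=
  ∀ φ : ℝ → ℂ, MemLp φ 2 (volume : Measure ℝ) →
    Tendsto (fun n => ∫ x : ℝ, f n x * (starRingEnd ℂ) (φ x)) atTop (nhds 0)

/-- Japanese bracket `⟨x⟩ = (1 + x²)^{1/2}`. -/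
def jb (x : ℝ) : ℝ := Real.sqrt (1 + x ^ 2)

/-- Asymptotic orthogonality of two parameter sequences `(λ, ξ, x, t)`. -/
def AsympOrth (l1 xi1 x1 t1 l2 xi2 x2 t2 : ℕ → ℝ) : Prop :=
  Tendsto (fun n =>
    l1 n / l2 n + l2 n / l1 n + Real.sqrt (l1 n * l2 n) * |xi1 n - xi2 n|
    + Real.sqrt (jb (l1 n * xi1 n * (l2 n * xi2 n))) *
        |((l1 n)^3 * t1 n - (l2 n)^3 * t2 n) / (l1 n * l2 n) ^ ((3:ℝ)/2)|
    + (l1 n * l2 n) ^ (-(1:ℝ)/2) *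
        |x1 n - x2 n + (3/2) * ((l1 n)^3 * t1 n - (l2 n)^3 * t2 n) * ((xi1 n)^2 + (xi2 n)^2)|)
    atTop atTop

/-- A parameter sequence `Γ_n = (λ_n, ξ_n, x_n, t_n)` tends to `∞`. -/
def GammaToInfty (l xi x t : ℕ → ℝ) : Prop :=
  Tendsto (fun n => l n + (l n)⁻¹ + |xi n| + |t n| + |x n|) atTop atTop

/-- The linear profile piece `g_{x₀,λ} e^{-t₀∂_x³} Re[e^{ixξλ} φ]`. -/
def profilePiece (lam xi x0 t0 : ℝ) (φ : ℝ → ℂ) : ℝ → ℝ :=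
  gAct x0 lam (airy t0 (fun x => (Complex.exp (Complex.I * x * (xi * lam)) * φ x).re))

/-- The linearized operator `L f = -f'' + f - 5Q⁴ f`. -/
def Lop (f : ℝ → ℝ) : ℝ → ℝ := fun y => -(deriv (deriv f)) y + f y - 5 * (Q y)^4 * f y

/-- The nonlinear remainder `R(ε) = 10Q³ε² + 10Q²ε³ + 5Qε⁴ + ε⁵`. -/
def Rop (e : ℝ → ℝ) : ℝ → ℝ :=
  fun y => 10 * (Q y)^3 * (e y)^2 + 10 * (Q y)^2 * (e y)^3 + 5 * Q y * (e y)^4 + (e y)^5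

def Q1 (x : ℝ) : ℝ :=
  -((3:ℝ) ^ ((1:ℝ)/4)) * (Real.sinh (2*x) * Real.cosh (2*x) ^ (-(3:ℝ)/2))
def Q2 (x : ℝ) : ℝ := Q x - (Q x)^5
def Q3 (x : ℝ) : ℝ := Q1 x - 5*(Q x)^4 * Q1 x
def Q4 (x : ℝ) : ℝ := Q2 x - 5*(Q x)^4*Q2 x - 20*(Q x)^3*(Q1 x)^2

lemma hasDerivAt_cosh2 (x : ℝ) :
    HasDerivAt (fun y : ℝ => Real.cosh (2*y)) (Real.sinh (2*x) * 2) x := by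
  have h1 : HasDerivAt (fun y : ℝ => 2*y) 2 x := by
    simpa using (hasDerivAt_id x).const_mul (2:ℝ)
  exact (Real.hasDerivAt_cosh (2*x)).comp x h1

lemma hasDerivAt_sinh2 (x : ℝ) :
    HasDerivAt (fun y : ℝ => Real.sinh (2*y)) (Real.cosh (2*x) * 2) x := by
  have h1 : HasDerivAt (fun y : ℝ => 2*y) 2 x := by
    simpa using (hasDerivAt_id x).const_mul (2:ℝ)
  exact (Real.hasDerivAt_sinh (2*x)).comp x h1

lemma hasDerivAt_Q (x : ℝ) : HasDerivAt Q (Q1 x) x := by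
  have hr : HasDerivAt (fun y => Real.cosh (2*y) ^ (-(1:ℝ)/2))
      ((Real.sinh (2*x) * 2) * (-(1:ℝ)/2) * Real.cosh (2*x) ^ ((-(1:ℝ)/2) - 1)) x :=
    (hasDerivAt_cosh2 x).rpow_const (Or.inl (Real.cosh_pos (2*x)).ne')
  have h := hr.const_mul ((3:ℝ) ^ ((1:ℝ)/4))
  have he : (-(1:ℝ)/2 - 1) = (-(3:ℝ)/2) := by norm_num
  rw [he] at h
  refine h.congr_deriv ?_
  unfold Q1; ring

lemma hasDerivAt_Q1 (x : ℝ) : HasDerivAt Q1 (Q2 x) x := by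
  have hr : HasDerivAt (fun y => Real.cosh (2*y) ^ (-(3:ℝ)/2))
      ((Real.sinh (2*x) * 2) * (-(3:ℝ)/2) * Real.cosh (2*x) ^ ((-(3:ℝ)/2) - 1)) x :=
    (hasDerivAt_cosh2 x).rpow_const (Or.inl (Real.cosh_pos (2*x)).ne')
  have he : (-(3:ℝ)/2 - 1) = (-(5:ℝ)/2) := by norm_num
  rw [he] at hr
  have h := ((hasDerivAt_sinh2 x).mul hr).const_mul (-((3:ℝ) ^ ((1:ℝ)/4)))
  refine h.congr_deriv ?_; symm
  set α : ℝ := (3:ℝ) ^ ((1:ℝ)/4) with hα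
  set c : ℝ := Real.cosh (2*x) with hcdef
  set s : ℝ := Real.sinh (2*x) with hsdef
  have hc : 0 < c := Real.cosh_pos (2*x)
  have f1 : c * c ^ (-(3:ℝ)/2) = c ^ (-(1:ℝ)/2) := by
    rw [show c * c ^ (-(3:ℝ)/2) = c ^ (1:ℝ) * c ^ (-(3:ℝ)/2) by rw [Real.rpow_one],
      ← Real.rpow_add hc]
    norm_num
  have f2 : s^2 = c^2 - 1 := by
    rw [hsdef, hcdef, Real.sinh_sq]
  have f3 : c^2 * c ^ (-(5:ℝ)/2) = c ^ (-(1:ℝ)/2) := by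
    rw [← Real.rpow_natCast c 2, ← Real.rpow_add hc]
    norm_num
  have f4 : (c ^ (-(1:ℝ)/2))^(5:ℕ) = c ^ (-(5:ℝ)/2) := by
    rw [← Real.rpow_natCast (c ^ (-(1:ℝ)/2)) 5, ← Real.rpow_mul hc.le]
    norm_num
  have f5 : α^(5:ℕ) = 3*α := by
    rw [hα, show ((3:ℝ) ^ ((1:ℝ)/4))^(5:ℕ) = ((3:ℝ) ^ ((1:ℝ)/4))^(4:ℕ) * (3:ℝ) ^ ((1:ℝ)/4) by ring,
      ← Real.rpow_natCast ((3:ℝ) ^ ((1:ℝ)/4)) 4, ← Real.rpow_mul (by norm_num : (0:ℝ) ≤ 3)]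
    norm_num
  show Q2 x = _
  unfold Q2 Q
  rw [← hα, ← hcdef]
  linear_combination (2*α)*f1 + (-3*α*(c ^ (-(5:ℝ)/2)))*f2 + (-3*α)*f3
    + (-(α^(5:ℕ)))*f4 + (-(c ^ (-(5:ℝ)/2)))*f5

lemma hasDerivAt_Q2 (x : ℝ) : HasDerivAt Q2 (Q3 x) x := by
  have h := (hasDerivAt_Q x).sub ((hasDerivAt_Q x).pow 5)
  refine h.congr_deriv ?_; symm
  all_goals (try (show Q3 x = _; unfold Q3; push_cast; ring))

lemma hasDerivAt_Q3 (x : ℝ) : HasDerivAt Q3 (Q4 x) x := by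
  have h := (hasDerivAt_Q1 x).sub
    ((((hasDerivAt_Q x).pow 4).const_mul (5:ℝ)).mul (hasDerivAt_Q1 x))
  refine h.congr_deriv ?_; symm
  show Q4 x = _; unfold Q4; simp only [Pi.pow_apply]; push_cast; ring

lemma deriv_Q : deriv Q = Q1 := funext fun x => (hasDerivAt_Q x).deriv
lemma deriv_Q1 : deriv Q1 = Q2 := funext fun x => (hasDerivAt_Q1 x).deriv
lemma deriv_Q2 : deriv Q2 = Q3 := funext fun x => (hasDerivAt_Q2 x).deriv
lemma deriv_Q3 : deriv Q3 = Q4 := funext fun x => (hasDerivAt_Q3 x).deriv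

lemma contQ : Continuous Q :=
  continuous_iff_continuousAt.mpr fun x => (hasDerivAt_Q x).continuousAt
lemma contQ1 : Continuous Q1 :=
  continuous_iff_continuousAt.mpr fun x => (hasDerivAt_Q1 x).continuousAt
lemma contQ2 : Continuous Q2 :=
  continuous_iff_continuousAt.mpr fun x => (hasDerivAt_Q2 x).continuousAt
lemma contQ3 : Continuous Q3 :=
  continuous_iff_continuousAt.mpr fun x => (hasDerivAt_Q3 x).continuousAt
lemma contQ4 : Continuous Q4 := by
  unfold Q4
  exact (contQ2.sub ((continuous_const.mul (contQ.pow 4)).mul contQ2)).sub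
    ((continuous_const.mul (contQ.pow 3)).mul (contQ1.pow 2))
def EE (x : ℝ) : ℝ := Real.exp (-|x|)
def E2 (x : ℝ) : ℝ := Real.exp (-(|x|/2))

lemma E2_pos (x : ℝ) : 0 < E2 x := Real.exp_pos _
lemma EE_pos (x : ℝ) : 0 < EE x := Real.exp_pos _
lemma E2_le_one (x : ℝ) : E2 x ≤ 1 :=
  Real.exp_le_one_iff.mpr (by linarith [abs_nonneg x])
lemma EE_le_E2 (x : ℝ) : EE x ≤ E2 x :=
  Real.exp_le_exp.mpr (by linarith [abs_nonneg x])
lemma EE_le_one (x : ℝ) : EE x ≤ 1 :=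
  Real.exp_le_one_iff.mpr (by linarith [abs_nonneg x])
lemma E2_sq (x : ℝ) : E2 x ^ 2 = EE x := by
  rw [E2, EE, sq, ← Real.exp_add]; congr 1; ring

lemma abs_sinh_le_cosh (t : ℝ) : |Real.sinh t| ≤ Real.cosh t := by
  rw [abs_le, Real.sinh_eq, Real.cosh_eq]
  constructor <;> nlinarith [Real.exp_pos t, Real.exp_pos (-t)]

lemma cosh_ge (x : ℝ) : Real.exp (2*|x|) / 2 ≤ Real.cosh (2*x) := by
  rw [Real.cosh_eq]
  rcases le_total 0 x with h | h
  · rw [abs_of_nonneg h]; nlinarith [Real.exp_pos (-(2*x))]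
  · rw [abs_of_nonpos h]
    have : 2*(-x) = -(2*x) := by ring
    rw [this]
    nlinarith [Real.exp_pos (2*x)]

lemma crpow_le (x : ℝ) : Real.cosh (2*x) ^ (-(1:ℝ)/2) ≤ 2 * EE x := by
  have h0 : (0:ℝ) < Real.exp (2*|x|) / 2 := by positivity
  have h1 : Real.cosh (2*x) ^ (-(1:ℝ)/2) ≤ (Real.exp (2*|x|) / 2) ^ (-(1:ℝ)/2) :=
    Real.rpow_le_rpow_of_nonpos h0 (cosh_ge x) (by norm_num)
  have h2 : (Real.exp (2*|x|) / 2) ^ (-(1:ℝ)/2)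
      = Real.exp (-|x|) * ((2:ℝ) ^ ((1:ℝ)/2)) := by
    rw [show (-(1:ℝ)/2) = -((1:ℝ)/2) by norm_num, Real.rpow_neg (by positivity),
      Real.div_rpow (Real.exp_nonneg _) (by norm_num), ← Real.exp_mul,
      show 2*|x| * ((1:ℝ)/2) = |x| by ring, inv_div, div_eq_mul_inv, ← Real.exp_neg]
    ring
  have h3 : (2:ℝ) ^ ((1:ℝ)/2) ≤ 2 := by
    calc (2:ℝ) ^ ((1:ℝ)/2) ≤ (2:ℝ) ^ (1:ℝ) :=
          Real.rpow_le_rpow_of_exponent_le (by norm_num) (by norm_num)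
      _ = 2 := Real.rpow_one 2
  calc Real.cosh (2*x) ^ (-(1:ℝ)/2) ≤ Real.exp (-|x|) * ((2:ℝ) ^ ((1:ℝ)/2)) := h2 ▸ h1
    _ ≤ Real.exp (-|x|) * 2 := by nlinarith [Real.exp_pos (-|x|)]
    _ = 2 * EE x := by rw [EE]; ring

lemma crpow_le_one (x : ℝ) : Real.cosh (2*x) ^ (-(1:ℝ)/2) ≤ 1 :=
  Real.rpow_le_one_of_one_le_of_nonpos (Real.one_le_cosh (2*x)) (by norm_num)

lemma alpha_le : (3:ℝ) ^ ((1:ℝ)/4) ≤ 3 := by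
  calc (3:ℝ) ^ ((1:ℝ)/4) ≤ (3:ℝ) ^ (1:ℝ) :=
        Real.rpow_le_rpow_of_exponent_le (by norm_num) (by norm_num)
    _ = 3 := Real.rpow_one 3
lemma alpha_pos : 0 < (3:ℝ) ^ ((1:ℝ)/4) := Real.rpow_pos_of_pos (by norm_num) _

lemma Q_pos (x : ℝ) : 0 < Q x :=
  mul_pos alpha_pos (Real.rpow_pos_of_pos (Real.cosh_pos (2*x)) _)
lemma Q_le_three (x : ℝ) : Q x ≤ 3 := by
  have h1 := crpow_le_one x
  have h2 := Real.rpow_pos_of_pos (Real.cosh_pos (2*x)) (-(1:ℝ)/2)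
  calc Q x ≤ 3 * (Real.cosh (2*x) ^ (-(1:ℝ)/2)) := by
        unfold Q; nlinarith [alpha_le, alpha_pos]
    _ ≤ 3 := by nlinarith
lemma Q_le_EE (x : ℝ) : Q x ≤ 6 * EE x := by
  have h1 := crpow_le x
  have h2 := Real.rpow_pos_of_pos (Real.cosh_pos (2*x)) (-(1:ℝ)/2)
  unfold Q
  nlinarith [alpha_le, alpha_pos, EE_pos x]

lemma cosh_mul_rpow (x : ℝ) :
    Real.cosh (2*x) * Real.cosh (2*x) ^ (-(3:ℝ)/2) = Real.cosh (2*x) ^ (-(1:ℝ)/2) := by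
  nth_rewrite 1 [show Real.cosh (2*x) = Real.cosh (2*x) ^ (1:ℝ) by rw [Real.rpow_one]]
  rw [← Real.rpow_add (Real.cosh_pos (2*x))]
  norm_num

lemma Q1_abs_le' (x : ℝ) : |Q1 x| ≤ 3 * Real.cosh (2*x) ^ (-(1:ℝ)/2) := by
  have hs := abs_sinh_le_cosh (2*x)
  have hr := Real.rpow_pos_of_pos (Real.cosh_pos (2*x)) (-(3:ℝ)/2)
  have hmul := cosh_mul_rpow x
  have : |Q1 x| = (3:ℝ)^((1:ℝ)/4) * (|Real.sinh (2*x)| * Real.cosh (2*x) ^ (-(3:ℝ)/2)) := by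
    rw [Q1, abs_mul, abs_mul, abs_neg, abs_of_pos alpha_pos, abs_of_pos hr]
  rw [this, ← hmul]
  calc (3:ℝ)^((1:ℝ)/4) * (|Real.sinh (2*x)| * Real.cosh (2*x) ^ (-(3:ℝ)/2))
      ≤ (3:ℝ)^((1:ℝ)/4) * (Real.cosh (2*x) * Real.cosh (2*x) ^ (-(3:ℝ)/2)) :=
        mul_le_mul_of_nonneg_left (mul_le_mul_of_nonneg_right hs hr.le) alpha_pos.le
    _ ≤ 3 * (Real.cosh (2*x) * Real.cosh (2*x) ^ (-(3:ℝ)/2)) := by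
        apply mul_le_mul_of_nonneg_right alpha_le
        positivity

lemma Q1_abs_le_EE (x : ℝ) : |Q1 x| ≤ 6 * EE x := by
  have := Q1_abs_le' x
  have h1 := crpow_le x
  nlinarith [Real.rpow_pos_of_pos (Real.cosh_pos (2*x)) (-(1:ℝ)/2)]
lemma Q1_abs_le_three (x : ℝ) : |Q1 x| ≤ 3 := by
  have := Q1_abs_le' x
  have h1 := crpow_le_one x
  nlinarith [Real.rpow_pos_of_pos (Real.cosh_pos (2*x)) (-(1:ℝ)/2)]

lemma Q2_abs_le_EE (x : ℝ) : |Q2 x| ≤ 500 * EE x := by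
  have h1 := Q_le_EE x; have h2 := Q_le_three x; have h3 := Q_pos x
  have : |Q2 x| ≤ Q x + Q x ^ 5 := by
    rw [Q2]
    calc |Q x - Q x ^ 5| ≤ |Q x| + |Q x ^ 5| := abs_sub _ _
      _ = Q x + Q x ^ 5 := by rw [abs_of_pos h3, abs_of_pos (by positivity)]
  have h9 : Q x ^ 4 ≤ 81 := by nlinarith [pow_le_pow_left₀ h3.le h2 4]
  nlinarith [EE_pos x, mul_le_mul_of_nonneg_right h9 h3.le, h1]

lemma Q3_abs_le_EE (x : ℝ) : |Q3 x| ≤ 2500 * EE x := by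
  have h1 := Q1_abs_le_EE x; have h2 := Q_le_three x; have h3 := Q_pos x
  have h4 := abs_nonneg (Q1 x)
  have : |Q3 x| ≤ |Q1 x| + 5 * Q x ^ 4 * |Q1 x| := by
    rw [Q3]
    calc |Q1 x - 5 * Q x ^ 4 * Q1 x| ≤ |Q1 x| + |5 * Q x ^ 4 * Q1 x| := abs_sub _ _
      _ = |Q1 x| + 5 * Q x ^ 4 * |Q1 x| := by
          rw [abs_mul, abs_of_pos (by positivity : (0:ℝ) < 5 * Q x ^ 4)]
  have h9 : Q x ^ 4 ≤ 81 := by nlinarith [pow_le_pow_left₀ h3.le h2 4]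
  nlinarith [EE_pos x, mul_le_mul_of_nonneg_right h9 h4, h1,
    mul_le_mul_of_nonneg_left h1 (by positivity : (0:ℝ) ≤ 5 * Q x ^ 4)]

lemma Q4_abs_le_EE (x : ℝ) : |Q4 x| ≤ 1000000 * EE x := by
  have h1 := Q2_abs_le_EE x; have h2 := Q_le_three x; have h3 := Q_pos x
  have h4 := Q1_abs_le_three x; have h5 := Q1_abs_le_EE x
  have h6 := abs_nonneg (Q1 x); have h7 := abs_nonneg (Q2 x)
  have : |Q4 x| ≤ |Q2 x| + 5 * Q x ^ 4 * |Q2 x| + 20 * Q x ^ 3 * |Q1 x| ^ 2 := by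
    rw [Q4]
    calc |Q2 x - 5 * Q x ^ 4 * Q2 x - 20 * Q x ^ 3 * Q1 x ^ 2|
        ≤ |Q2 x - 5 * Q x ^ 4 * Q2 x| + |20 * Q x ^ 3 * Q1 x ^ 2| := abs_sub _ _
      _ ≤ |Q2 x| + |5 * Q x ^ 4 * Q2 x| + |20 * Q x ^ 3 * Q1 x ^ 2| := by
          have := abs_sub (Q2 x) (5 * Q x ^ 4 * Q2 x); linarith
      _ = |Q2 x| + 5 * Q x ^ 4 * |Q2 x| + 20 * Q x ^ 3 * |Q1 x| ^ 2 := by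
          simp [abs_mul, abs_pow, abs_of_pos h3]
  have h9 : Q x ^ 4 ≤ 81 := by nlinarith [pow_le_pow_left₀ h3.le h2 4]
  have h10 : Q x ^ 3 ≤ 27 := by nlinarith [pow_le_pow_left₀ h3.le h2 3]
  have h11 : 5 * Q x ^ 4 * |Q2 x| ≤ 405 * (500 * EE x) := by
    have : 5 * Q x ^ 4 * |Q2 x| ≤ 405 * |Q2 x| := by nlinarith
    nlinarith
  have h12 : 20 * Q x ^ 3 * |Q1 x| ^ 2 ≤ 1620 * (6 * EE x) := by
    have e1 : |Q1 x| ^ 2 ≤ 3 * |Q1 x| := by nlinarith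
    have e2 : 20 * Q x ^ 3 * |Q1 x| ^ 2 ≤ 540 * |Q1 x| ^ 2 := by nlinarith [sq_nonneg (Q1 x), sq_abs (Q1 x)]
    nlinarith [h5, h6]
  nlinarith [EE_pos x]

lemma pow_le_exp4 (t : ℝ) (ht : 0 ≤ t) : t ^ 4 ≤ 4096 * Real.exp (t/2) := by
  have h1 : t/8 ≤ Real.exp (t/8) := by linarith [Real.add_one_le_exp (t/8)]
  have h2 : Real.exp (t/2) = Real.exp (t/8) ^ (4:ℕ) := by
    rw [← Real.exp_nat_mul]; congr 1; push_cast; ring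
  have h3 : (t/8) ^ 4 ≤ Real.exp (t/8) ^ 4 := by
    apply pow_le_pow_left₀ (by positivity) h1
  rw [h2]; nlinarith

lemma abs_pow_le (y : ℝ) (k : ℕ) (hk : k ≤ 3) : |y| ^ k ≤ 1 + |y| ^ 4 := by
  have h := abs_nonneg y
  interval_cases k
  · nlinarith [pow_nonneg h 4]
  · nlinarith [sq_nonneg (|y|^2 - 1), sq_nonneg (|y| - 1), sq_nonneg (|y| + 1)]
  · nlinarith [sq_nonneg (|y|^2 - 1)]
  · nlinarith [sq_nonneg (|y|^2 - |y|), sq_nonneg (|y| - 1), sq_nonneg (|y|^2 - 1)]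

lemma yk_EE_le (y : ℝ) (k : ℕ) (hk : k ≤ 3) : |y| ^ k * EE y ≤ 4097 * E2 y := by
  have h1 := abs_pow_le y k hk
  have h2 : |y| ^ 4 * EE y ≤ 4096 * E2 y := by
    have h3 := pow_le_exp4 |y| (abs_nonneg y)
    have h4 : Real.exp (|y|/2) * EE y = E2 y := by
      rw [EE, E2, ← Real.exp_add]; ring_nf
    calc |y| ^ 4 * EE y ≤ (4096 * Real.exp (|y|/2)) * EE y := by
          nlinarith [EE_pos y]
      _ = 4096 * E2 y := by rw [mul_assoc, h4]
  have h5 := EE_le_E2 y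
  have h6 := EE_pos y
  nlinarith [E2_pos y]


-- ## Integration layer
lemma cont_EE : Continuous EE := Real.continuous_exp.comp continuous_abs.neg
lemma cont_E2 : Continuous E2 :=
  Real.continuous_exp.comp ((continuous_abs.div_const 2).neg)

lemma integrable_EE : Integrable EE (volume : Measure ℝ) := by
  have h1 : IntegrableOn EE (Ioi (0:ℝ)) volume := by
    apply (exp_neg_integrableOn_Ioi 0 (by norm_num : (0:ℝ) < 1)).congr_fun _ measurableSet_Ioi
    intro x hx
    simp only [EE, abs_of_pos (mem_Ioi.mp hx)]
    ring_nf
  have h2 : IntegrableOn EE (Iic (0:ℝ)) volume := by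
    apply (integrableOn_exp_Iic 0).congr_fun _ measurableSet_Iic
    intro x hx
    simp only [EE, abs_of_nonpos (mem_Iic.mp hx), neg_neg]
  have := h2.union h1
  rw [Set.Iic_union_Ioi] at this
  exact integrableOn_univ.mp this

lemma memL2_E2 : MemLp E2 2 (volume : Measure ℝ) := by
  rw [memLp_two_iff_integrable_sq cont_E2.aestronglyMeasurable]
  exact integrable_EE.congr (Eventually.of_forall fun x => (E2_sq x).symm)

lemma memL2_of_bound {w : ℝ → ℝ} (hw : Continuous w) (C : ℝ)
    (hb : ∀ y, |w y| ≤ C * E2 y) : MemLp w 2 (volume : Measure ℝ) :=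
  memL2_E2.of_le_mul hw.aestronglyMeasurable (Eventually.of_forall fun y => by
    simpa [Real.norm_eq_abs, abs_of_pos (E2_pos y)] using hb y)

lemma cs {f g : ℝ → ℝ} (hf : MemLp f 2 (volume : Measure ℝ))
    (hg : MemLp g 2 (volume : Measure ℝ)) :
    |∫ y : ℝ, f y * g y| ≤
      (eLpNorm f 2 (volume : Measure ℝ)).toReal * (eLpNorm g 2 (volume : Measure ℝ)).toReal := by
  have h1 : ∫ y : ℝ, f y * g y = @inner ℝ _ _ (hf.toLp f) (hg.toLp g) := by
    rw [MeasureTheory.L2.inner_def]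
    apply integral_congr_ae
    filter_upwards [hf.coeFn_toLp, hg.coeFn_toLp] with y h1 h2
    rw [h1, h2, RCLike.inner_apply, starRingEnd_apply]
    simp
    ring
  rw [h1]
  calc |@inner ℝ _ _ (hf.toLp f) (hg.toLp g)| ≤ ‖hf.toLp f‖ * ‖hg.toLp g‖ :=
        abs_real_inner_le_norm _ _
    _ = _ := by rw [Lp.norm_toLp, Lp.norm_toLp]

lemma integrable_mul_L2 {f g : ℝ → ℝ} (hf : MemLp f 2 (volume : Measure ℝ))
    (hg : MemLp g 2 (volume : Measure ℝ)) :
    Integrable (fun y => f y * g y) (volume : Measure ℝ) := by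
  have h := hg.smul (r := 1) hf
  rw [memLp_one_iff_integrable] at h
  exact h.congr (Eventually.of_forall fun y => by simp [smul_eq_mul])

lemma eLpNorm_le_of_bound {w : ℝ → ℝ} (C : ℝ) (hC : 0 ≤ C)
    (hb : ∀ y, |w y| ≤ C * E2 y) :
    (eLpNorm w 2 (volume : Measure ℝ)).toReal ≤ C * (eLpNorm E2 2 (volume : Measure ℝ)).toReal := by
  have h1 : eLpNorm w 2 (volume : Measure ℝ) ≤ eLpNorm (fun y => C * E2 y) 2 volume := by
    apply eLpNorm_mono_real
    intro y
    calc ‖w y‖ = |w y| := Real.norm_eq_abs _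
      _ ≤ C * E2 y := hb y
  have h2 : eLpNorm (fun y => C * E2 y) 2 (volume : Measure ℝ) = ‖C‖₊ * eLpNorm E2 2 volume := by
    have : (fun y => C * E2 y) = C • E2 := by funext y; simp [smul_eq_mul]
    rw [this, eLpNorm_const_smul]
    rfl
  have h3 : eLpNorm (fun y => C * E2 y) 2 (volume : Measure ℝ) ≠ ⊤ := by
    rw [h2]
    exact ENNReal.mul_ne_top ENNReal.coe_ne_top memL2_E2.2.ne
  calc (eLpNorm w 2 (volume : Measure ℝ)).toReal
      ≤ (eLpNorm (fun y => C * E2 y) 2 (volume : Measure ℝ)).toReal := ENNReal.toReal_mono h3 h1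
    _ = C * (eLpNorm E2 2 (volume : Measure ℝ)).toReal := by
        rw [h2, ENNReal.toReal_mul, ENNReal.coe_toReal, coe_nnnorm, Real.norm_eq_abs,
          abs_of_nonneg hC]

/-- Linear estimate: `|∫ w ε| ≤ C W ‖ε‖₂`. -/
lemma lin_est {w ε : ℝ → ℝ} (hw : Continuous w) (C : ℝ) (hC : 0 ≤ C)
    (hb : ∀ y, |w y| ≤ C * E2 y) (hε : MemLp ε 2 (volume : Measure ℝ)) :
    |∫ y : ℝ, w y * ε y| ≤ C * (eLpNorm E2 2 (volume : Measure ℝ)).toReal *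
      (eLpNorm ε 2 (volume : Measure ℝ)).toReal := by
  have hmem := memL2_of_bound hw C hb
  calc |∫ y : ℝ, w y * ε y| ≤ (eLpNorm w 2 volume).toReal * (eLpNorm ε 2 volume).toReal :=
        cs hmem hε
    _ ≤ C * (eLpNorm E2 2 volume).toReal * (eLpNorm ε 2 volume).toReal := by
        apply mul_le_mul_of_nonneg_right (eLpNorm_le_of_bound C hC hb) ENNReal.toReal_nonneg

lemma lin_est' {w ε : ℝ → ℝ} (hw : Continuous w) (C : ℝ) (hC : 0 ≤ C)
    (hb : ∀ y, |w y| ≤ C * E2 y) (hε : MemLp ε 2 (volume : Measure ℝ)) :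
    |∫ y : ℝ, ε y * w y| ≤ C * (eLpNorm E2 2 (volume : Measure ℝ)).toReal *
      (eLpNorm ε 2 (volume : Measure ℝ)).toReal := by
  have := lin_est hw C hC hb hε
  have he : (∫ y : ℝ, ε y * w y) = ∫ y : ℝ, w y * ε y := by
    congr 1; funext y; ring
  rwa [he]

lemma memL2_abs_pow4 {ε : ℝ → ℝ} (hε8 : MemLp ε 8 (volume : Measure ℝ)) :
    MemLp (fun y => ‖ε y‖ ^ (4:ℕ)) 2 (volume : Measure ℝ) := by
  constructor
  · exact (continuous_pow 4).comp_aestronglyMeasurable hε8.1.norm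
  · have h := eLpNorm_norm_rpow ε (p := 2) (q := (4:ℝ)) (by norm_num) (μ := volume)
    have he : (fun y => ‖ε y‖ ^ ((4:ℝ))) = fun y => ‖ε y‖ ^ (4:ℕ) := by
      funext y; rw [← Real.rpow_natCast ‖ε y‖ 4]; norm_num
    have hp : (2 : ℝ≥0∞) * ENNReal.ofReal (4:ℝ) = 8 := by
      rw [ENNReal.ofReal_ofNat]; norm_num
    rw [he, hp] at h
    rw [h]
    exact ENNReal.rpow_lt_top_of_nonneg (by norm_num) hε8.2.ne

lemma eLpNorm_abs_pow4 {ε : ℝ → ℝ} :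
    (eLpNorm (fun y => ‖ε y‖ ^ (4:ℕ)) 2 (volume : Measure ℝ)).toReal
      = (eLpNorm ε 8 (volume : Measure ℝ)).toReal ^ (4:ℕ) := by
  have h := eLpNorm_norm_rpow ε (p := 2) (q := (4:ℝ)) (by norm_num) (μ := volume)
  have he : (fun y => ‖ε y‖ ^ ((4:ℝ))) = fun y => ‖ε y‖ ^ (4:ℕ) := by
    funext y; rw [← Real.rpow_natCast ‖ε y‖ 4]; norm_num
  have hp : (2 : ℝ≥0∞) * ENNReal.ofReal (4:ℝ) = 8 := by
    rw [ENNReal.ofReal_ofNat]; norm_num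
  rw [he, hp] at h
  rw [h, ← ENNReal.toReal_rpow, ← Real.rpow_natCast]
  norm_num

lemma tmid {t : ℝ} (ht : 0 ≤ t) {k : ℕ} (hk : 2 ≤ k) (hk5 : k ≤ 5) :
    t ^ k ≤ t ^ 2 + t ^ 5 := by
  rcases le_total t 1 with h | h
  · have := pow_le_pow_of_le_one ht h hk
    linarith [pow_nonneg ht 5]
  · have := pow_le_pow_right₀ h hk5
    linarith [pow_nonneg ht 2]

lemma Rop_abs_le {e : ℝ → ℝ} (y : ℝ) :
    |Rop e y| ≤ 375 * ((‖e y‖ + ‖e y‖ ^ (4:ℕ)) * ‖e y‖) := by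
  set t := |e y| with hts
  have ht : 0 ≤ t := abs_nonneg _
  have h3 : t ^ 3 ≤ t ^ 2 + t ^ 5 := tmid ht (by norm_num) (by norm_num)
  have h4 : t ^ 4 ≤ t ^ 2 + t ^ 5 := tmid ht (by norm_num) (by norm_num)
  have hQ := Q_pos y; have hQ3 := Q_le_three y
  have hq2 : Q y ^ 2 ≤ 9 := by nlinarith
  have hq3 : Q y ^ 3 ≤ 27 := by nlinarith
  have habs : |Rop e y| ≤ 10 * Q y ^ 3 * t ^ 2 + 10 * Q y ^ 2 * t ^ 3
      + 5 * Q y * t ^ 4 + t ^ 5 := by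
    unfold Rop
    calc |10 * Q y ^ 3 * e y ^ 2 + 10 * Q y ^ 2 * e y ^ 3 + 5 * Q y * e y ^ 4 + e y ^ 5|
        ≤ |10 * Q y ^ 3 * e y ^ 2 + 10 * Q y ^ 2 * e y ^ 3 + 5 * Q y * e y ^ 4| + |e y ^ 5| :=
          abs_add_le _ _
      _ ≤ |10 * Q y ^ 3 * e y ^ 2 + 10 * Q y ^ 2 * e y ^ 3| + |5 * Q y * e y ^ 4| + |e y ^ 5| := by
          linarith [abs_add_le (10 * Q y ^ 3 * e y ^ 2 + 10 * Q y ^ 2 * e y ^ 3) (5 * Q y * e y ^ 4)]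
      _ ≤ |10 * Q y ^ 3 * e y ^ 2| + |10 * Q y ^ 2 * e y ^ 3| + |5 * Q y * e y ^ 4| + |e y ^ 5| := by
          linarith [abs_add_le (10 * Q y ^ 3 * e y ^ 2) (10 * Q y ^ 2 * e y ^ 3)]
      _ = 10 * Q y ^ 3 * t ^ 2 + 10 * Q y ^ 2 * t ^ 3 + 5 * Q y * t ^ 4 + t ^ 5 := by
          simp [abs_mul, abs_pow, abs_of_pos hQ, hts]
  have he : ‖e y‖ = t := by rw [Real.norm_eq_abs]
  rw [he]
  have expand : (t + t ^ (4:ℕ)) * t = t ^ 2 + t ^ 5 := by ring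
  rw [expand]
  nlinarith [pow_nonneg ht 2, pow_nonneg ht 3, pow_nonneg ht 4, pow_nonneg ht 5,
    mul_le_mul_of_nonneg_right hq3 (pow_nonneg ht 2),
    mul_le_mul_of_nonneg_right hq2 (pow_nonneg ht 3),
    mul_le_mul_of_nonneg_right hQ3 (pow_nonneg ht 4)]

/-- Nonlinear estimate. -/
lemma R_est {v ε : ℝ → ℝ} (hv : Continuous v) (C : ℝ) (hC : 0 ≤ C)
    (hb : ∀ y, |v y| ≤ C) (hε2 : MemLp ε 2 (volume : Measure ℝ))
    (hε8 : MemLp ε 8 (volume : Measure ℝ)) :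
    |∫ y : ℝ, v y * Rop ε y| ≤ 375 * C *
      (((eLpNorm ε 2 (volume : Measure ℝ)).toReal
        + (eLpNorm ε 8 (volume : Measure ℝ)).toReal ^ (4:ℕ)) *
        (eLpNorm ε 2 (volume : Measure ℝ)).toReal) := by
  set A := fun y => ‖ε y‖ + ‖ε y‖ ^ (4:ℕ) with hA
  have memA : MemLp A 2 (volume : Measure ℝ) := hε2.norm.add (memL2_abs_pow4 hε8)
  have memnε : MemLp (fun y => ‖ε y‖) 2 (volume : Measure ℝ) := hε2.norm
  have hAint : Integrable (fun y => A y * ‖ε y‖) volume := integrable_mul_L2 memA memnε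
  have hptw : ∀ y, |v y * Rop ε y| ≤ 375 * C * (A y * ‖ε y‖) := by
    intro y
    rw [abs_mul]
    have h1 := Rop_abs_le (e := ε) y
    have h2 := hb y
    have hAnn : 0 ≤ A y * ‖ε y‖ := by positivity
    calc |v y| * |Rop ε y| ≤ C * (375 * (A y * ‖ε y‖)) := by
          apply mul_le_mul h2 h1 (abs_nonneg _) hC
      _ = 375 * C * (A y * ‖ε y‖) := by ring
  calc |∫ y : ℝ, v y * Rop ε y| ≤ ∫ y : ℝ, |v y * Rop ε y| := by
        simpa only [Real.norm_eq_abs] using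
          norm_integral_le_integral_norm (μ := (volume : Measure ℝ)) (fun y => v y * Rop ε y)
    _ ≤ ∫ y : ℝ, 375 * C * (A y * ‖ε y‖) := by
        apply integral_mono_of_nonneg (Eventually.of_forall fun y => abs_nonneg _)
          (hAint.const_mul _) (Eventually.of_forall hptw)
    _ = 375 * C * ∫ y : ℝ, A y * ‖ε y‖ := by
        rw [integral_const_mul]
    _ ≤ 375 * C * (((eLpNorm ε 2 (volume : Measure ℝ)).toReal
          + (eLpNorm ε 8 (volume : Measure ℝ)).toReal ^ (4:ℕ)) *
          (eLpNorm ε 2 (volume : Measure ℝ)).toReal) := by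
        apply mul_le_mul_of_nonneg_left _ (by positivity)
        have h1 : (∫ y : ℝ, A y * ‖ε y‖) ≤ (eLpNorm A 2 volume).toReal *
            (eLpNorm (fun y => ‖ε y‖) 2 volume).toReal :=
          le_trans (le_abs_self _) (cs memA memnε)
        have h2 : eLpNorm (fun y => ‖ε y‖) 2 (volume : Measure ℝ) = eLpNorm ε 2 volume :=
          eLpNorm_norm ε
        have h3 : (eLpNorm A 2 (volume : Measure ℝ)).toReal ≤
            (eLpNorm ε 2 volume).toReal + (eLpNorm ε 8 volume).toReal ^ (4:ℕ) := by
          have ht : eLpNorm A 2 (volume : Measure ℝ) ≤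
              eLpNorm (fun y => ‖ε y‖) 2 volume + eLpNorm (fun y => ‖ε y‖ ^ (4:ℕ)) 2 volume := by
            apply eLpNorm_add_le memnε.1 (memL2_abs_pow4 hε8).1 one_le_two
          calc (eLpNorm A 2 (volume : Measure ℝ)).toReal
              ≤ (eLpNorm (fun y => ‖ε y‖) 2 volume + eLpNorm (fun y => ‖ε y‖ ^ (4:ℕ)) 2 volume).toReal := by
                apply ENNReal.toReal_mono _ ht
                exact ENNReal.add_ne_top.mpr ⟨memnε.2.ne, (memL2_abs_pow4 hε8).2.ne⟩
            _ = (eLpNorm (fun y => ‖ε y‖) 2 volume).toReal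
                + (eLpNorm (fun y => ‖ε y‖ ^ (4:ℕ)) 2 (volume : Measure ℝ)).toReal :=
                ENNReal.toReal_add memnε.2.ne (memL2_abs_pow4 hε8).2.ne
            _ = (eLpNorm ε 2 volume).toReal + (eLpNorm ε 8 volume).toReal ^ (4:ℕ) := by
                rw [h2, eLpNorm_abs_pow4]
        calc (∫ y : ℝ, A y * ‖ε y‖)
            ≤ (eLpNorm A 2 volume).toReal * (eLpNorm ε 2 volume).toReal := by rw [← h2]; exact h1
          _ ≤ ((eLpNorm ε 2 volume).toReal + (eLpNorm ε 8 volume).toReal ^ (4:ℕ)) *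
              (eLpNorm ε 2 volume).toReal :=
              mul_le_mul_of_nonneg_right h3 ENNReal.toReal_nonneg

lemma R_est' {v ε : ℝ → ℝ} (hv : Continuous v) (C : ℝ) (hC : 0 ≤ C)
    (hb : ∀ y, |v y| ≤ C) (hε2 : MemLp ε 2 (volume : Measure ℝ))
    (hε8 : MemLp ε 8 (volume : Measure ℝ)) :
    |∫ y : ℝ, Rop ε y * v y| ≤ 375 * C *
      (((eLpNorm ε 2 (volume : Measure ℝ)).toReal
        + (eLpNorm ε 8 (volume : Measure ℝ)).toReal ^ (4:ℕ)) *
        (eLpNorm ε 2 (volume : Measure ℝ)).toReal) := by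
  have := R_est hv C hC hb hε2 hε8
  have he : (∫ y : ℝ, Rop ε y * v y) = ∫ y : ℝ, v y * Rop ε y := by
    congr 1; funext y; ring
  rwa [he]

-- ## Stage 4: weight bounds
lemma habsQ (x : ℝ) : |Q x| ≤ 6 * EE x := by
  rw [abs_of_pos (Q_pos x)]; exact Q_le_EE x

lemma tb {g : ℝ → ℝ} {c : ℝ} (hc : 0 ≤ c) (hg : ∀ x, |g x| ≤ c * EE x)
    (k : ℕ) (hk : k ≤ 3) (y : ℝ) :
    |y| ^ k * |g y| ≤ c * 4097 * E2 y := by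
  calc |y|^k * |g y| ≤ |y|^k * (c * EE y) :=
        mul_le_mul_of_nonneg_left (hg y) (pow_nonneg (abs_nonneg y) k)
    _ = c * (|y|^k * EE y) := by ring
    _ ≤ c * (4097 * E2 y) := mul_le_mul_of_nonneg_left (yk_EE_le y k hk) hc
    _ = c * 4097 * E2 y := by ring

def CW : ℝ := 10^10

lemma CW_nonneg : (0:ℝ) ≤ CW := by norm_num [CW]

lemma hq4 (y : ℝ) : Q y ^ 4 ≤ 81 := by
  nlinarith [pow_le_pow_left₀ (Q_pos y).le (Q_le_three y) 4]

-- the seven bound packs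
lemma pack (y : ℝ) :
    |Q y| ≤ 6 * 4097 * E2 y ∧ |Q1 y| ≤ 6 * 4097 * E2 y ∧ |Q2 y| ≤ 500 * 4097 * E2 y ∧
    |Q3 y| ≤ 2500 * 4097 * E2 y ∧ |Q4 y| ≤ 1000000 * 4097 * E2 y ∧
    |y| * |Q y| ≤ 6 * 4097 * E2 y ∧ |y| * |Q1 y| ≤ 6 * 4097 * E2 y ∧
    |y| * |Q2 y| ≤ 500 * 4097 * E2 y ∧ |y| * |Q3 y| ≤ 2500 * 4097 * E2 y ∧
    |y| * |Q4 y| ≤ 1000000 * 4097 * E2 y ∧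
    |y|^2 * |Q1 y| ≤ 6 * 4097 * E2 y ∧ |y|^2 * |Q2 y| ≤ 500 * 4097 * E2 y ∧
    |y|^2 * |Q4 y| ≤ 1000000 * 4097 * E2 y ∧ |y|^3 * |Q2 y| ≤ 500 * 4097 * E2 y := by
  have k0 : ∀ {g : ℝ → ℝ} {c : ℝ}, 0 ≤ c → (∀ x, |g x| ≤ c * EE x) →
      |g y| ≤ c * 4097 * E2 y := by
    intro g c hc hg
    simpa using tb hc hg 0 (by norm_num) y
  have k1 : ∀ {g : ℝ → ℝ} {c : ℝ}, 0 ≤ c → (∀ x, |g x| ≤ c * EE x) →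
      |y| * |g y| ≤ c * 4097 * E2 y := by
    intro g c hc hg
    simpa using tb hc hg 1 (by norm_num) y
  refine ⟨k0 (by norm_num) habsQ, k0 (by norm_num) Q1_abs_le_EE, k0 (by norm_num) Q2_abs_le_EE,
    k0 (by norm_num) Q3_abs_le_EE, k0 (by norm_num) Q4_abs_le_EE,
    k1 (by norm_num) habsQ, k1 (by norm_num) Q1_abs_le_EE, k1 (by norm_num) Q2_abs_le_EE,
    k1 (by norm_num) Q3_abs_le_EE, k1 (by norm_num) Q4_abs_le_EE,
    tb (by norm_num) Q1_abs_le_EE 2 (by norm_num) y, tb (by norm_num) Q2_abs_le_EE 2 (by norm_num) y,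
    tb (by norm_num) Q4_abs_le_EE 2 (by norm_num) y, tb (by norm_num) Q2_abs_le_EE 3 (by norm_num) y⟩

lemma bw0 (y : ℝ) : |Q y / 2 + y * Q1 y| ≤ CW * E2 y := by
  obtain ⟨p0, p1, p2, p3, p4, q0, q1, q2, q3, q4, r1, r2, r4, s2⟩ := pack y
  have h := abs_add_le (Q y / 2) (y * Q1 y)
  rw [abs_div, abs_mul] at h
  have : |(2:ℝ)| = 2 := by norm_num
  rw [this] at h
  have hE := E2_pos y
  calc |Q y / 2 + y * Q1 y| ≤ |Q y|/2 + |y| * |Q1 y| := h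
    _ ≤ CW * E2 y := by rw [CW]; nlinarith

lemma bw1 (y : ℝ) : |2 * y * Q1 y + y ^ 2 * Q2 y| ≤ CW * E2 y := by
  obtain ⟨p0, p1, p2, p3, p4, q0, q1, q2, q3, q4, r1, r2, r4, s2⟩ := pack y
  have h := abs_add_le (2 * y * Q1 y) (y ^ 2 * Q2 y)
  have h1 : |2 * y * Q1 y| = 2 * (|y| * |Q1 y|) := by
    rw [abs_mul, abs_mul, abs_two]; ring
  have h2 : |y ^ 2 * Q2 y| = |y|^2 * |Q2 y| := by rw [abs_mul, abs_pow]
  rw [h1, h2] at h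
  have hE := E2_pos y
  calc |2 * y * Q1 y + y ^ 2 * Q2 y| ≤ 2 * (|y| * |Q1 y|) + |y|^2 * |Q2 y| := h
    _ ≤ CW * E2 y := by rw [CW]; nlinarith

lemma bw2 (y : ℝ) : |y * Q2 y + Q1 y| ≤ CW * E2 y := by
  obtain ⟨p0, p1, p2, p3, p4, q0, q1, q2, q3, q4, r1, r2, r4, s2⟩ := pack y
  have h := abs_add_le (y * Q2 y) (Q1 y)
  rw [abs_mul] at h
  have hE := E2_pos y
  calc |y * Q2 y + Q1 y| ≤ |y| * |Q2 y| + |Q1 y| := h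
    _ ≤ CW * E2 y := by rw [CW]; nlinarith

lemma bw3 (y : ℝ) : |y * Q y + 7 / 2 * y ^ 2 * Q1 y + y ^ 3 * Q2 y| ≤ CW * E2 y := by
  obtain ⟨p0, p1, p2, p3, p4, q0, q1, q2, q3, q4, r1, r2, r4, s2⟩ := pack y
  have h1 := abs_add_le (y * Q y + 7 / 2 * y ^ 2 * Q1 y) (y ^ 3 * Q2 y)
  have h2 := abs_add_le (y * Q y) (7 / 2 * y ^ 2 * Q1 y)
  have e1 : |y * Q y| = |y| * |Q y| := abs_mul _ _
  have e2 : |7 / 2 * y ^ 2 * Q1 y| = 7/2 * (|y|^2 * |Q1 y|) := by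
    rw [abs_mul, abs_mul, abs_pow]
    rw [show |(7:ℝ)/2| = 7/2 by norm_num]
    ring
  have e3 : |y ^ 3 * Q2 y| = |y|^3 * |Q2 y| := by rw [abs_mul, abs_pow]
  rw [e1, e2] at h2
  rw [e3] at h1
  have hE := E2_pos y
  calc |y * Q y + 7 / 2 * y ^ 2 * Q1 y + y ^ 3 * Q2 y|
      ≤ |y * Q y + 7 / 2 * y ^ 2 * Q1 y| + |y|^3 * |Q2 y| := h1
    _ ≤ |y| * |Q y| + 7/2 * (|y|^2 * |Q1 y|) + |y|^3 * |Q2 y| := by linarith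
    _ ≤ CW * E2 y := by rw [CW]; nlinarith

lemma bw4 (y : ℝ) : |Q y / 2 + 5 / 2 * y * Q1 y + y ^ 2 * Q2 y| ≤ CW * E2 y := by
  obtain ⟨p0, p1, p2, p3, p4, q0, q1, q2, q3, q4, r1, r2, r4, s2⟩ := pack y
  have h1 := abs_add_le (Q y / 2 + 5 / 2 * y * Q1 y) (y ^ 2 * Q2 y)
  have h2 := abs_add_le (Q y / 2) (5 / 2 * y * Q1 y)
  have e1 : |Q y / 2| = |Q y| / 2 := by rw [abs_div]; norm_num
  have e2 : |5 / 2 * y * Q1 y| = 5/2 * (|y| * |Q1 y|) := by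
    rw [abs_mul, abs_mul, show |(5:ℝ)/2| = 5/2 by norm_num]; ring
  have e3 : |y ^ 2 * Q2 y| = |y|^2 * |Q2 y| := by rw [abs_mul, abs_pow]
  rw [e1, e2] at h2
  rw [e3] at h1
  have hE := E2_pos y
  calc |Q y / 2 + 5 / 2 * y * Q1 y + y ^ 2 * Q2 y|
      ≤ |Q y / 2 + 5 / 2 * y * Q1 y| + |y|^2 * |Q2 y| := h1
    _ ≤ |Q y|/2 + 5/2 * (|y| * |Q1 y|) + |y|^2 * |Q2 y| := by linarith
    _ ≤ CW * E2 y := by rw [CW]; nlinarith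

lemma bwg1 (y : ℝ) :
    |(-(3 * Q3 y + y * Q4 y) + (y * Q2 y + Q1 y) - 5 * Q y ^ 4 * (y * Q2 y + Q1 y))|
      ≤ CW * E2 y := by
  obtain ⟨p0, p1, p2, p3, p4, q0, q1, q2, q3, q4, r1, r2, r4, s2⟩ := pack y
  have hh : |y * Q2 y + Q1 y| ≤ |y| * |Q2 y| + |Q1 y| := by
    have := abs_add_le (y * Q2 y) (Q1 y); rwa [abs_mul] at this
  have hn : |(-(3 * Q3 y + y * Q4 y))| ≤ 3 * |Q3 y| + |y| * |Q4 y| := by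
    rw [abs_neg]
    have := abs_add_le (3 * Q3 y) (y * Q4 y)
    rw [abs_mul, abs_mul, show |(3:ℝ)| = 3 by norm_num] at this
    linarith
  have h5 : |5 * Q y ^ 4 * (y * Q2 y + Q1 y)| ≤ 405 * (|y| * |Q2 y| + |Q1 y|) := by
    rw [abs_mul, abs_mul, show |(5:ℝ)| = 5 by norm_num, abs_pow, abs_of_pos (Q_pos y)]
    have h81 := hq4 y
    have hnn := abs_nonneg (y * Q2 y + Q1 y)
    nlinarith [abs_nonneg (Q2 y), abs_nonneg (Q1 y), abs_nonneg y,
      mul_le_mul_of_nonneg_right h81 hnn, hh,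
      mul_nonneg (mul_nonneg (by norm_num : (0:ℝ) ≤ 5) (pow_nonneg (Q_pos y).le 4)) hnn]
  have t1 := abs_sub ((-(3 * Q3 y + y * Q4 y)) + (y * Q2 y + Q1 y)) (5 * Q y ^ 4 * (y * Q2 y + Q1 y))
  have t2 := abs_add_le (-(3 * Q3 y + y * Q4 y)) (y * Q2 y + Q1 y)
  have hE := E2_pos y
  calc |(-(3 * Q3 y + y * Q4 y) + (y * Q2 y + Q1 y) - 5 * Q y ^ 4 * (y * Q2 y + Q1 y))|
      ≤ |(-(3 * Q3 y + y * Q4 y)) + (y * Q2 y + Q1 y)| + |5 * Q y ^ 4 * (y * Q2 y + Q1 y)| := t1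
    _ ≤ |(-(3 * Q3 y + y * Q4 y))| + |y * Q2 y + Q1 y| + |5 * Q y ^ 4 * (y * Q2 y + Q1 y)| := by
        linarith
    _ ≤ CW * E2 y := by rw [CW]; nlinarith

lemma bwg2 (y : ℝ) :
    |(-(15 / 2 * Q2 y + 13 / 2 * y * Q3 y + y ^ 2 * Q4 y)
        + (Q y / 2 + 5 / 2 * y * Q1 y + y ^ 2 * Q2 y)
        - 5 * Q y ^ 4 * (Q y / 2 + 5 / 2 * y * Q1 y + y ^ 2 * Q2 y))| ≤ CW * E2 y := by
  obtain ⟨p0, p1, p2, p3, p4, q0, q1, q2, q3, q4, r1, r2, r4, s2⟩ := pack y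
  have hE := E2_pos y
  have hh : |Q y / 2 + 5 / 2 * y * Q1 y + y ^ 2 * Q2 y|
      ≤ |Q y|/2 + 5/2 * (|y| * |Q1 y|) + |y|^2 * |Q2 y| := by
    have h1 := abs_add_le (Q y / 2 + 5 / 2 * y * Q1 y) (y ^ 2 * Q2 y)
    have h2 := abs_add_le (Q y / 2) (5 / 2 * y * Q1 y)
    have e1 : |Q y / 2| = |Q y| / 2 := by rw [abs_div]; norm_num
    have e2 : |5 / 2 * y * Q1 y| = 5/2 * (|y| * |Q1 y|) := by
      rw [abs_mul, abs_mul, show |(5:ℝ)/2| = 5/2 by norm_num]; ring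
    have e3 : |y ^ 2 * Q2 y| = |y|^2 * |Q2 y| := by rw [abs_mul, abs_pow]
    rw [e1, e2] at h2
    rw [e3] at h1
    linarith
  have hn : |(-(15 / 2 * Q2 y + 13 / 2 * y * Q3 y + y ^ 2 * Q4 y))|
      ≤ 15/2 * |Q2 y| + 13/2 * (|y| * |Q3 y|) + |y|^2 * |Q4 y| := by
    rw [abs_neg]
    have h1 := abs_add_le (15 / 2 * Q2 y + 13 / 2 * y * Q3 y) (y ^ 2 * Q4 y)
    have h2 := abs_add_le (15 / 2 * Q2 y) (13 / 2 * y * Q3 y)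
    have e1 : |15 / 2 * Q2 y| = 15/2 * |Q2 y| := by
      rw [abs_mul, show |(15:ℝ)/2| = 15/2 by norm_num]
    have e2 : |13 / 2 * y * Q3 y| = 13/2 * (|y| * |Q3 y|) := by
      rw [abs_mul, abs_mul, show |(13:ℝ)/2| = 13/2 by norm_num]; ring
    have e3 : |y ^ 2 * Q4 y| = |y|^2 * |Q4 y| := by rw [abs_mul, abs_pow]
    rw [e1, e2] at h2
    rw [e3] at h1
    linarith
  have h5 : |5 * Q y ^ 4 * (Q y / 2 + 5 / 2 * y * Q1 y + y ^ 2 * Q2 y)|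
      ≤ 405 * (|Q y|/2 + 5/2 * (|y| * |Q1 y|) + |y|^2 * |Q2 y|) := by
    rw [abs_mul, abs_mul, show |(5:ℝ)| = 5 by norm_num, abs_pow, abs_of_pos (Q_pos y)]
    have h81 := hq4 y
    have hnn := abs_nonneg (Q y / 2 + 5 / 2 * y * Q1 y + y ^ 2 * Q2 y)
    nlinarith [mul_le_mul_of_nonneg_right h81 hnn, hh, abs_of_pos (Q_pos y),
      mul_nonneg (mul_nonneg (by norm_num : (0:ℝ) ≤ 5) (pow_nonneg (Q_pos y).le 4)) hnn]
  have t1 := abs_sub ((-(15 / 2 * Q2 y + 13 / 2 * y * Q3 y + y ^ 2 * Q4 y))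
      + (Q y / 2 + 5 / 2 * y * Q1 y + y ^ 2 * Q2 y))
      (5 * Q y ^ 4 * (Q y / 2 + 5 / 2 * y * Q1 y + y ^ 2 * Q2 y))
  have t2 := abs_add_le (-(15 / 2 * Q2 y + 13 / 2 * y * Q3 y + y ^ 2 * Q4 y))
      (Q y / 2 + 5 / 2 * y * Q1 y + y ^ 2 * Q2 y)
  calc |(-(15 / 2 * Q2 y + 13 / 2 * y * Q3 y + y ^ 2 * Q4 y)
        + (Q y / 2 + 5 / 2 * y * Q1 y + y ^ 2 * Q2 y)
        - 5 * Q y ^ 4 * (Q y / 2 + 5 / 2 * y * Q1 y + y ^ 2 * Q2 y))|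
      ≤ |(-(15 / 2 * Q2 y + 13 / 2 * y * Q3 y + y ^ 2 * Q4 y))
          + (Q y / 2 + 5 / 2 * y * Q1 y + y ^ 2 * Q2 y)|
        + |5 * Q y ^ 4 * (Q y / 2 + 5 / 2 * y * Q1 y + y ^ 2 * Q2 y)| := t1
    _ ≤ |(-(15 / 2 * Q2 y + 13 / 2 * y * Q3 y + y ^ 2 * Q4 y))|
        + |Q y / 2 + 5 / 2 * y * Q1 y + y ^ 2 * Q2 y|
        + |5 * Q y ^ 4 * (Q y / 2 + 5 / 2 * y * Q1 y + y ^ 2 * Q2 y)| := by linarith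
    _ ≤ CW * E2 y := by rw [CW]; nlinarith

lemma bv1 (y : ℝ) : |y * Q1 y| ≤ CW := by
  obtain ⟨p0, p1, p2, p3, p4, q0, q1, q2, q3, q4, r1, r2, r4, s2⟩ := pack y
  have h := E2_le_one y
  have hE := E2_pos y
  rw [abs_mul, CW]
  nlinarith

lemma bv4 (y : ℝ) : |Q y / 2 + 5 / 2 * y * Q1 y + y ^ 2 * Q2 y| ≤ CW := by
  have h1 := bw4 y
  have h := E2_le_one y
  have hE := E2_pos y
  nlinarith [CW_nonneg]


-- ## Stage 5
attribute [fun_prop] contQ contQ1 contQ2 contQ3 contQ4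

lemma hasDerivAt_f1 (x : ℝ) :
    HasDerivAt (fun z => z * Q2 z + Q1 z) (2*Q2 x + x*Q3 x) x := by
  have h := ((hasDerivAt_id x).mul (hasDerivAt_Q2 x)).add (hasDerivAt_Q1 x)
  refine h.congr_deriv ?_; symm
  simp only [id_eq]
  ring

lemma hasDerivAt_df1 (x : ℝ) :
    HasDerivAt (fun z => 2*Q2 z + z*Q3 z) (3*Q3 x + x*Q4 x) x := by
  have h := ((hasDerivAt_Q2 x).const_mul (2:ℝ)).add ((hasDerivAt_id x).mul (hasDerivAt_Q3 x))
  refine h.congr_deriv ?_; symm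
  simp only [id_eq]
  ring

lemma Lop_f1 : Lop (fun z => z * Q2 z + Q1 z)
    = fun y => -(3*Q3 y + y*Q4 y) + (y*Q2 y + Q1 y) - 5*(Q y)^4*(y*Q2 y + Q1 y) := by
  funext y
  unfold Lop
  rw [show deriv (fun z => z * Q2 z + Q1 z) = fun z => 2*Q2 z + z*Q3 z from
      funext fun t => (hasDerivAt_f1 t).deriv,
    show deriv (fun z => 2*Q2 z + z*Q3 z) = fun z => 3*Q3 z + z*Q4 z from
      funext fun t => (hasDerivAt_df1 t).deriv]

lemma hasDerivAt_f2 (x : ℝ) :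
    HasDerivAt (fun z => Q z / 2 + 5 / 2 * z * Q1 z + z ^ 2 * Q2 z)
      (3*Q1 x + 9/2*x*Q2 x + x^2*Q3 x) x := by
  have h1 : HasDerivAt (fun z : ℝ => 5 / 2 * z) (5/2) x := by
    simpa using (hasDerivAt_id x).const_mul (5/2 : ℝ)
  have h := (((hasDerivAt_Q x).div_const 2).add (h1.mul (hasDerivAt_Q1 x))).add
    ((hasDerivAt_pow 2 x).mul (hasDerivAt_Q2 x))
  refine h.congr_deriv ?_; symm
  push_cast
  ring

lemma hasDerivAt_df2 (x : ℝ) :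
    HasDerivAt (fun z => 3*Q1 z + 9/2*z*Q2 z + z^2*Q3 z)
      (15/2*Q2 x + 13/2*x*Q3 x + x^2*Q4 x) x := by
  have h1 : HasDerivAt (fun z : ℝ => 9 / 2 * z) (9/2) x := by
    simpa using (hasDerivAt_id x).const_mul (9/2 : ℝ)
  have h := (((hasDerivAt_Q1 x).const_mul (3:ℝ)).add (h1.mul (hasDerivAt_Q2 x))).add
    ((hasDerivAt_pow 2 x).mul (hasDerivAt_Q3 x))
  refine h.congr_deriv ?_; symm
  push_cast
  ring

lemma Lop_f2 : Lop (fun z => Q z / 2 + 5 / 2 * z * Q1 z + z ^ 2 * Q2 z)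
    = fun y => -(15 / 2 * Q2 y + 13 / 2 * y * Q3 y + y ^ 2 * Q4 y)
        + (Q y / 2 + 5 / 2 * y * Q1 y + y ^ 2 * Q2 y)
        - 5 * Q y ^ 4 * (Q y / 2 + 5 / 2 * y * Q1 y + y ^ 2 * Q2 y) := by
  funext y
  unfold Lop
  rw [show deriv (fun z => Q z / 2 + 5 / 2 * z * Q1 z + z ^ 2 * Q2 z)
      = fun z => 3*Q1 z + 9/2*z*Q2 z + z^2*Q3 z from
      funext fun t => (hasDerivAt_f2 t).deriv,
    show deriv (fun z => 3*Q1 z + 9/2*z*Q2 z + z^2*Q3 z)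
      = fun z => 15/2*Q2 z + 13/2*z*Q3 z + z^2*Q4 z from
      funext fun t => (hasDerivAt_df2 t).deriv]

def Wc : ℝ := (eLpNorm E2 2 (volume : Measure ℝ)).toReal
def Kc : ℝ := CW * Wc + 375 * CW
def c0v : ℝ := ∫ y : ℝ, (Q y / 2 + y * Q1 y) ^ 2

lemma Wc_nonneg : 0 ≤ Wc := ENNReal.toReal_nonneg
lemma Kc_nonneg : 0 ≤ Kc :=
  add_nonneg (mul_nonneg CW_nonneg Wc_nonneg) (mul_nonneg (by norm_num) CW_nonneg)

lemma cont_w0 : Continuous (fun y : ℝ => (Q y / 2 + y * Q1 y) ^ 2) := by fun_prop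

lemma c0_int : Integrable (fun y : ℝ => (Q y / 2 + y * Q1 y) ^ 2) (volume : Measure ℝ) := by
  apply Integrable.mono' (integrable_EE.const_mul (CW^2)) cont_w0.aestronglyMeasurable
  refine Eventually.of_forall fun y => ?_
  have hb := bw0 y
  have h2 : (Q y / 2 + y * Q1 y) ^ 2 ≤ (CW * E2 y) ^ 2 := by
    have := pow_le_pow_left₀ (abs_nonneg (Q y / 2 + y * Q1 y)) hb 2
    rwa [sq_abs] at this
  calc ‖(Q y / 2 + y * Q1 y) ^ 2‖ = (Q y / 2 + y * Q1 y) ^ 2 := by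
        rw [Real.norm_eq_abs, abs_of_nonneg (sq_nonneg _)]
    _ ≤ (CW * E2 y) ^ 2 := h2
    _ = CW ^ 2 * EE y := by rw [mul_pow, E2_sq]

lemma c0_pos : 0 < c0v := by
  rw [c0v, integral_pos_iff_support_of_nonneg (fun y => sq_nonneg _) c0_int]
  have hopen : IsOpen (Function.support fun y : ℝ => (Q y / 2 + y * Q1 y) ^ 2) := by
    have he : Function.support (fun y : ℝ => (Q y / 2 + y * Q1 y) ^ 2)
        = (fun y : ℝ => (Q y / 2 + y * Q1 y) ^ 2) ⁻¹' ({0}ᶜ) := by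
      ext t; simp [Function.mem_support]
    rw [he]
    exact isOpen_compl_singleton.preimage cont_w0
  apply hopen.measure_pos volume
  refine ⟨0, ?_⟩
  simp only [Function.mem_support]
  have h0 := Q_pos 0
  intro h
  simp only [zero_mul, add_zero] at h
  nlinarith


set_option maxHeartbeats 2000000 in
/-- modulation parameter bounds: if `ε ∈ L² ∩ L⁸` is small in `L²` and `a, b`
satisfy the modulation equations, then `|a| + |b| ≤ C(‖ε‖_{L²} + ‖ε‖_{L²}‖ε‖_{L⁸}⁴)`. -/
theorem modulation_parameter_bounds :
    ∃ δ C : ℝ, 0 < δ ∧ 0 < C ∧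
      ∀ (ε : ℝ → ℝ) (a b : ℝ),
        MemLp ε 2 (volume : Measure ℝ) → MemLp ε 8 (volume : Measure ℝ) →
        (eLpNorm ε 2 (volume : Measure ℝ)).toReal ≤ δ →
        (a * ((∫ y : ℝ, (Q y / 2 + y * deriv Q y) ^ 2)
              - ∫ y : ℝ, (2 * y * deriv Q y + y ^ 2 * deriv (deriv Q) y) * ε y)
          - b * ∫ y : ℝ, (y * deriv (deriv Q) y + deriv Q y) * ε y
          = (∫ y : ℝ, Lop (fun z => z * deriv (deriv Q) z + deriv Q z) y * ε y)
            - ∫ y : ℝ, Rop ε y * (y * deriv Q y)) →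
        (-(a * ∫ y : ℝ, ε y * (y * Q y + (7/2) * y ^ 2 * deriv Q y + y ^ 3 * deriv (deriv Q) y))
          + b * ((∫ y : ℝ, (Q y / 2 + y * deriv Q y) ^ 2)
              - ∫ y : ℝ, (Q y / 2 + (5/2) * y * deriv Q y + y ^ 2 * deriv (deriv Q) y) * ε y)
          = (∫ y : ℝ, Lop (fun z => Q z / 2 + (5/2) * z * deriv Q z + z ^ 2 * deriv (deriv Q) z) y
                * ε y)
            - ∫ y : ℝ, (Q y / 2 + (5/2) * y * deriv Q y + y ^ 2 * deriv (deriv Q) y) * Rop ε y) →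
        |a| + |b| ≤ C * ((eLpNorm ε 2 (volume : Measure ℝ)).toReal
          + (eLpNorm ε 2 (volume : Measure ℝ)).toReal
            * (eLpNorm ε 8 (volume : Measure ℝ)).toReal ^ 4) := by
  have hCWWc : (0:ℝ) ≤ CW * Wc := mul_nonneg CW_nonneg Wc_nonneg
  have hc0 := c0_pos
  refine ⟨min 1 (c0v / (4 * (CW * Wc + 1))), 6 * Kc / c0v + 1,
    lt_min one_pos (div_pos hc0 (by linarith)), ?_, ?_⟩
  · have h1 : (0:ℝ) ≤ 6 * Kc / c0v := div_nonneg (by linarith [Kc_nonneg]) hc0.le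
    linarith
  intro ε a b hε2 hε8 hδ heq1 heq2
  simp only [deriv_Q, deriv_Q1] at heq1 heq2
  simp only [Lop_f1, Lop_f2] at heq1 heq2
  have hc0eq : (∫ y : ℝ, (Q y / 2 + y * Q1 y) ^ 2) = c0v := rfl
  rw [hc0eq] at heq1 heq2
  set N2 := (eLpNorm ε 2 (volume : Measure ℝ)).toReal with hN2def
  set N8 := (eLpNorm ε 8 (volume : Measure ℝ)).toReal with hN8def
  have hN2nn : 0 ≤ N2 := ENNReal.toReal_nonneg
  have hN8nn : 0 ≤ N8 := ENNReal.toReal_nonneg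
  have hδ1 : N2 ≤ 1 := le_trans hδ (min_le_left _ _)
  have hδ2 : N2 ≤ c0v / (4 * (CW * Wc + 1)) := le_trans hδ (min_le_right _ _)
  have h4 : N2 * (4 * (CW * Wc + 1)) ≤ c0v := by
    rw [le_div_iff₀ (by linarith)] at hδ2; exact hδ2
  have hBq : CW * Wc * N2 ≤ c0v / 4 := by
    have he : N2 * (4 * (CW * Wc + 1)) = 4 * (CW * Wc * N2) + 4 * N2 := by ring
    rw [he] at h4
    linarith only [h4, hN2nn]
  -- atoms
  set J1 := ∫ y : ℝ, (2 * y * Q1 y + y ^ 2 * Q2 y) * ε y with hJ1def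
  set J2 := ∫ y : ℝ, (y * Q2 y + Q1 y) * ε y with hJ2def
  set J3 := ∫ y : ℝ, ε y * (y * Q y + 7 / 2 * y ^ 2 * Q1 y + y ^ 3 * Q2 y) with hJ3def
  set J4 := ∫ y : ℝ, (Q y / 2 + 5 / 2 * y * Q1 y + y ^ 2 * Q2 y) * ε y with hJ4def
  set G1 := ∫ y : ℝ, (-(3 * Q3 y + y * Q4 y) + (y * Q2 y + Q1 y)
      - 5 * Q y ^ 4 * (y * Q2 y + Q1 y)) * ε y with hG1def
  set G2 := ∫ y : ℝ, (-(15 / 2 * Q2 y + 13 / 2 * y * Q3 y + y ^ 2 * Q4 y)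
      + (Q y / 2 + 5 / 2 * y * Q1 y + y ^ 2 * Q2 y)
      - 5 * Q y ^ 4 * (Q y / 2 + 5 / 2 * y * Q1 y + y ^ 2 * Q2 y)) * ε y with hG2def
  set R1 := ∫ y : ℝ, Rop ε y * (y * Q1 y) with hR1def
  set R2 := ∫ y : ℝ, (Q y / 2 + 5 / 2 * y * Q1 y + y ^ 2 * Q2 y) * Rop ε y with hR2def
  -- bounds on atoms
  have hJ1b : |J1| ≤ CW * Wc * N2 := lin_est (by fun_prop) CW CW_nonneg bw1 hε2
  have hJ2b : |J2| ≤ CW * Wc * N2 := lin_est (by fun_prop) CW CW_nonneg bw2 hε2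
  have hJ3b : |J3| ≤ CW * Wc * N2 := lin_est' (by fun_prop) CW CW_nonneg bw3 hε2
  have hJ4b : |J4| ≤ CW * Wc * N2 := lin_est (by fun_prop) CW CW_nonneg bw4 hε2
  have hG1b : |G1| ≤ CW * Wc * N2 := lin_est (by fun_prop) CW CW_nonneg bwg1 hε2
  have hG2b : |G2| ≤ CW * Wc * N2 := lin_est (by fun_prop) CW CW_nonneg bwg2 hε2
  have hR1b : |R1| ≤ 375 * CW * ((N2 + N8 ^ (4:ℕ)) * N2) :=
    R_est' (by fun_prop) CW CW_nonneg bv1 hε2 hε8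
  have hR2b : |R2| ≤ 375 * CW * ((N2 + N8 ^ (4:ℕ)) * N2) :=
    R_est (by fun_prop) CW CW_nonneg bv4 hε2 hε8
  -- combined RHS bound
  set S := N2 + N2 * N8 ^ 4 with hSdef
  have hterm : 0 ≤ N2 * N8 ^ 4 := mul_nonneg hN2nn (pow_nonneg hN8nn 4)
  have hSnn : 0 ≤ S := by rw [hSdef]; linarith only [hterm, hN2nn]
  have hN2S : N2 ≤ S := by rw [hSdef]; linarith only [hterm]
  have hcw375 : (0:ℝ) ≤ 375 * CW := mul_nonneg (by norm_num) CW_nonneg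
  have hsq : N2 * N2 ≤ N2 := by
    have := mul_le_mul_of_nonneg_right hδ1 hN2nn
    rwa [one_mul] at this
  have hmid : (N2 + N8 ^ (4:ℕ)) * N2 ≤ S := by
    have he : (N2 + N8 ^ (4:ℕ)) * N2 = N2 * N2 + N2 * N8 ^ 4 := by ring
    rw [he, hSdef]
    linarith only [hsq, hterm]
  have hexp : 375 * CW * ((N2 + N8 ^ (4:ℕ)) * N2) ≤ 375 * CW * S :=
    mul_le_mul_of_nonneg_left hmid hcw375
  have he1 : CW * Wc * N2 ≤ CW * Wc * S := mul_le_mul_of_nonneg_left hN2S hCWWc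
  have hKcS : Kc * S = CW * Wc * S + 375 * CW * S := by rw [Kc]; ring
  have hr1 : |G1 - R1| ≤ Kc * S := by
    have h := abs_sub G1 R1
    linarith only [h, hG1b, hR1b, hexp, he1, hKcS]
  have hr2 : |G2 - R2| ≤ Kc * S := by
    have h := abs_sub G2 R2
    linarith only [h, hG2b, hR2b, hexp, he1, hKcS]
  -- smallness of J's
  have hJ1s : |J1| ≤ c0v / 4 := le_trans hJ1b hBq
  have hJ2s : |J2| ≤ c0v / 4 := le_trans hJ2b hBq
  have hJ3s : |J3| ≤ c0v / 4 := le_trans hJ3b hBq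
  have hJ4s : |J4| ≤ c0v / 4 := le_trans hJ4b hBq
  obtain ⟨hJ1l, hJ1r⟩ := abs_le.mp hJ1s
  obtain ⟨hJ2l, hJ2r⟩ := abs_le.mp hJ2s
  obtain ⟨hJ3l, hJ3r⟩ := abs_le.mp hJ3s
  obtain ⟨hJ4l, hJ4r⟩ := abs_le.mp hJ4s
  -- determinant
  have hdet : c0v ^ 2 / 2 ≤ (c0v - J1) * (c0v - J4) - J2 * J3 := by
    have hAD : (3/4*c0v) * (3/4*c0v) ≤ (c0v - J1) * (c0v - J4) :=
      mul_le_mul (by linarith only [hJ1r]) (by linarith only [hJ4r])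
        (by linarith only [hc0]) (by linarith only [hJ1r, hc0])
    have hJ23 : J2 * J3 ≤ c0v ^ 2 / 16 := by
      calc J2 * J3 ≤ |J2 * J3| := le_abs_self _
        _ = |J2| * |J3| := abs_mul _ _
        _ ≤ (c0v/4) * (c0v/4) := mul_le_mul hJ2s hJ3s (abs_nonneg _) (by linarith only [hc0])
        _ = c0v ^ 2 / 16 := by ring
    linarith only [hAD, hJ23]
  have hdetnn : 0 ≤ (c0v - J1) * (c0v - J4) - J2 * J3 := by
    have h := sq_nonneg c0v
    linarith only [hdet, h]
  -- linear algebra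
  have ha_eq : a * ((c0v - J1) * (c0v - J4) - J2 * J3)
      = (G1 - R1) * (c0v - J4) + (G2 - R2) * J2 := by
    linear_combination (c0v - J4) * heq1 + J2 * heq2
  have hb_eq : b * ((c0v - J1) * (c0v - J4) - J2 * J3)
      = (G2 - R2) * (c0v - J1) + (G1 - R1) * J3 := by
    linear_combination J3 * heq1 + (c0v - J1) * heq2
  have hKS : 0 ≤ Kc * S := mul_nonneg Kc_nonneg hSnn
  have habsD : |c0v - J4| ≤ 5/4 * c0v :=
    abs_le.mpr ⟨by linarith only [hJ4r, hc0], by linarith only [hJ4l, hc0]⟩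
  have habsA : |c0v - J1| ≤ 5/4 * c0v :=
    abs_le.mpr ⟨by linarith only [hJ1r, hc0], by linarith only [hJ1l, hc0]⟩
  have hach : |a| * (c0v ^ 2 / 2) ≤ 3 * Kc * S * (c0v / 2) := by
    calc |a| * (c0v ^ 2 / 2) ≤ |a| * ((c0v - J1) * (c0v - J4) - J2 * J3) :=
          mul_le_mul_of_nonneg_left hdet (abs_nonneg a)
      _ = |a * ((c0v - J1) * (c0v - J4) - J2 * J3)| := by
          rw [abs_mul, abs_of_nonneg hdetnn]
      _ = |(G1 - R1) * (c0v - J4) + (G2 - R2) * J2| := by rw [ha_eq]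
      _ ≤ |G1 - R1| * |c0v - J4| + |G2 - R2| * |J2| := by
          calc |(G1 - R1) * (c0v - J4) + (G2 - R2) * J2|
              ≤ |(G1 - R1) * (c0v - J4)| + |(G2 - R2) * J2| := abs_add_le _ _
            _ = |G1 - R1| * |c0v - J4| + |G2 - R2| * |J2| := by rw [abs_mul, abs_mul]
      _ ≤ (Kc * S) * (5/4 * c0v) + (Kc * S) * (c0v / 4) := by
          have t1 : |G1 - R1| * |c0v - J4| ≤ (Kc * S) * (5/4 * c0v) :=
            mul_le_mul hr1 habsD (abs_nonneg _) hKS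
          have t2 : |G2 - R2| * |J2| ≤ (Kc * S) * (c0v / 4) :=
            mul_le_mul hr2 hJ2s (abs_nonneg _) hKS
          linarith only [t1, t2]
      _ = 3 * Kc * S * (c0v / 2) := by ring
  have hbch : |b| * (c0v ^ 2 / 2) ≤ 3 * Kc * S * (c0v / 2) := by
    calc |b| * (c0v ^ 2 / 2) ≤ |b| * ((c0v - J1) * (c0v - J4) - J2 * J3) :=
          mul_le_mul_of_nonneg_left hdet (abs_nonneg b)
      _ = |b * ((c0v - J1) * (c0v - J4) - J2 * J3)| := by
          rw [abs_mul, abs_of_nonneg hdetnn]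
      _ = |(G2 - R2) * (c0v - J1) + (G1 - R1) * J3| := by rw [hb_eq]
      _ ≤ |G2 - R2| * |c0v - J1| + |G1 - R1| * |J3| := by
          calc |(G2 - R2) * (c0v - J1) + (G1 - R1) * J3|
              ≤ |(G2 - R2) * (c0v - J1)| + |(G1 - R1) * J3| := abs_add_le _ _
            _ = |G2 - R2| * |c0v - J1| + |G1 - R1| * |J3| := by rw [abs_mul, abs_mul]
      _ ≤ (Kc * S) * (5/4 * c0v) + (Kc * S) * (c0v / 4) := by
          have t1 : |G2 - R2| * |c0v - J1| ≤ (Kc * S) * (5/4 * c0v) :=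
            mul_le_mul hr2 habsA (abs_nonneg _) hKS
          have t2 : |G1 - R1| * |J3| ≤ (Kc * S) * (c0v / 4) :=
            mul_le_mul hr1 hJ3s (abs_nonneg _) hKS
          linarith only [t1, t2]
      _ = 3 * Kc * S * (c0v / 2) := by ring
  have haN : |a| * c0v ≤ 3 * Kc * S := by
    have h1 : (|a| * c0v) * (c0v / 2) ≤ (3 * Kc * S) * (c0v / 2) := by
      calc (|a| * c0v) * (c0v / 2) = |a| * (c0v ^ 2 / 2) := by ring
        _ ≤ 3 * Kc * S * (c0v / 2) := hach
        _ = (3 * Kc * S) * (c0v / 2) := by ring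
    exact le_of_mul_le_mul_right h1 (by linarith only [hc0])
  have hbN : |b| * c0v ≤ 3 * Kc * S := by
    have h1 : (|b| * c0v) * (c0v / 2) ≤ (3 * Kc * S) * (c0v / 2) := by
      calc (|b| * c0v) * (c0v / 2) = |b| * (c0v ^ 2 / 2) := by ring
        _ ≤ 3 * Kc * S * (c0v / 2) := hbch
        _ = (3 * Kc * S) * (c0v / 2) := by ring
    exact le_of_mul_le_mul_right h1 (by linarith only [hc0])
  have hfinal : |a| + |b| ≤ 6 * Kc * S / c0v := by
    rw [le_div_iff₀ hc0]
    linarith only [haN, hbN]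
  have hle : 6 * Kc * S / c0v ≤ (6 * Kc / c0v + 1) * S := by
    have he : 6 * Kc * S / c0v = (6 * Kc / c0v) * S := by ring
    have h2 : (6 * Kc / c0v) * S ≤ (6 * Kc / c0v + 1) * S :=
      mul_le_mul_of_nonneg_right (by linarith only [] : (6 * Kc / c0v) ≤ 6 * Kc / c0v + 1) hSnn
    linarith only [he, h2]
  calc |a| + |b| ≤ 6 * Kc * S / c0v := hfinal
    _ ≤ (6 * Kc / c0v + 1) * S := hle
    _ = (6 * Kc / c0v + 1) * (N2 + N2 * N8 ^ 4) := by rw [hSdef]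

end GKdV
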